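/- arXiv:1204.4399 — 2 statements merged into one kernel-verified Lean document; each statement's English description precedes it below -/
import Mathlib

section
/- A homogeneous form g = ∑_{|I|=t} E_I v^I of degree t in v₁,…,v_k is the symbol of a Laplace equation of order t for V at P (i.e. ∑_{|I|=t} E_I x̂^I(u₀) ∈ T^(t−1)(u₀)) if and only if g is apolar to every element of the t-th fundamental form of V at P, i.e. ∑_{|I|=t} E_I ∂^I F^t_ξ = 0 for every linear functional ξ ∈ (ℂ^{N+1})* vanishing on T^(t−1)(u₀). -/
/- Common setup: iterated partial derivatives, multi-indices, osculating spaces,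
fundamental forms for a local parametrisation `x : ℂ^k → ℂ^N` of a variety
`V ⊂ ℙ^N`, lifted to `x̂ = (1, x) : ℂ^k → ℂ^{N+1}`. -/

open scoped BigOperators

noncomputable section

/-- Iterated partial derivative of `f` along a list of coordinate directions. -/
def pderivList {k : ℕ} {E : Type} [NormedAddCommGroup E] [NormedSpace ℂ E] :
    List (Fin k) → ((Fin k → ℂ) → E) → ((Fin k → ℂ) → E)
  | [], f => f
  | j :: L, f => fun u => fderiv ℂ (pderivList L f) u (Pi.single j 1)

/-- The canonical list of coordinate directions attached to a multi-index `I : Fin k → ℕ`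
(the direction `j` repeated `I j` times). -/
def idxList {k : ℕ} (I : Fin k → ℕ) : List (Fin k) :=
  (List.finRange k).flatMap fun j => List.replicate (I j) j

/-- The partial derivative `∂^I f = ∂^{|I|} f / ∂u₁^{i₁} ⋯ ∂u_k^{i_k}`. -/
def pd {k : ℕ} {E : Type} [NormedAddCommGroup E] [NormedSpace ℂ E]
    (I : Fin k → ℕ) (f : (Fin k → ℂ) → E) : (Fin k → ℂ) → E :=
  pderivList (idxList I) f

/-- The finset of multi-indices `I : Fin k → ℕ` of total degree `|I| ≤ r`. -/
def degLE (k r : ℕ) : Finset (Fin k → ℕ) :=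
  (Finset.Iic fun _ : Fin k => r).filter fun I => (∑ j, I j) ≤ r

/-- The finset of multi-indices `I : Fin k → ℕ` of total degree `|I| = r`. -/
def degEq (k r : ℕ) : Finset (Fin k → ℕ) :=
  (Finset.Iic fun _ : Fin k => r).filter fun I => (∑ j, I j) = r

/-- The lift `x̂(u) = (1, x(u))` of the parametrisation `x` to the affine cone `ℂ^{N+1}`. -/
def coneLift {k N : ℕ} (x : (Fin k → ℂ) → (Fin N → ℂ)) : (Fin k → ℂ) → (Fin (N + 1) → ℂ) :=
  fun u => Fin.cons 1 (x u)

/-- `osc x̂ s u` is the affine cone `T^(s)(u)` over the `s`-th osculating space at the point of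
parameter `u`: the span of all partial derivatives `x̂^I(u)` with `|I| ≤ s`. -/
def osc {k N : ℕ} (xhat : (Fin k → ℂ) → (Fin (N + 1) → ℂ)) (s : ℕ) (u : Fin k → ℂ) :
    Submodule ℂ (Fin (N + 1) → ℂ) :=
  Submodule.span ℂ {y | ∃ I : Fin k → ℕ, (∑ j, I j) ≤ s ∧ y = pd I xhat u}

/-- The degree-`r` form `F^r_ξ(v) = ξ(D^r x̂(u₀)(v,…,v))`, as a function of `v ∈ ℂ^k`. -/
def formOf {k N : ℕ} (xhat : (Fin k → ℂ) → (Fin (N + 1) → ℂ)) (u₀ : Fin k → ℂ) (r : ℕ)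
    (ξ : Module.Dual ℂ (Fin (N + 1) → ℂ)) : (Fin k → ℂ) → ℂ :=
  fun v => ξ (iteratedFDeriv ℂ r xhat u₀ fun _ => v)

/-- The `r`-th fundamental form `|I^r|` of `V` at `P`, as the set of the forms `F^r_ξ` for `ξ`
a linear functional vanishing on `T^(r-1)(u₀)`. -/
def fundSet {k N : ℕ} (xhat : (Fin k → ℂ) → (Fin (N + 1) → ℂ)) (u₀ : Fin k → ℂ) (r : ℕ) :
    Set ((Fin k → ℂ) → ℂ) :=
  { F | ∃ ξ : Module.Dual ℂ (Fin (N + 1) → ℂ),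
      (∀ y ∈ osc xhat (r - 1) u₀, ξ y = 0) ∧ F = formOf xhat u₀ r ξ }

/-- The `r`-th fundamental form `|I^r|` as a subspace of the space of functions of `v`. -/
def fundForm {k N : ℕ} (xhat : (Fin k → ℂ) → (Fin (N + 1) → ℂ)) (u₀ : Fin k → ℂ) (r : ℕ) :
    Submodule ℂ ((Fin k → ℂ) → ℂ) :=
  Submodule.span ℂ (fundSet xhat u₀ r)

/-- The linear map sending the coefficients `(E_I)_{|I|=t}` of a degree-`t` form to
`∑_{|I|=t} E_I x̂^I(u₀) ∈ ℂ^{N+1}`; a form is the symbol of a Laplace equation of order `t`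
iff its coefficients are mapped into `T^(t-1)(u₀)`. -/
def symbolMap {k N : ℕ} (xhat : (Fin k → ℂ) → (Fin (N + 1) → ℂ)) (u₀ : Fin k → ℂ) (t : ℕ) :
    ({I : Fin k → ℕ // I ∈ degEq k t} → ℂ) →ₗ[ℂ] (Fin (N + 1) → ℂ) where
  toFun E := ∑ I : {I : Fin k → ℕ // I ∈ degEq k t}, E I • pd I.1 xhat u₀
  map_add' a b := by simp [add_smul, Finset.sum_add_distrib]
  map_smul' c a := by simp [smul_smul, Finset.smul_sum]

/-- The parametrisation `Φ_t(u, λ) = ∑_{|I| ≤ t} λ_I x̂^I(u)` of the affine cone over the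
`t`-th osculating variety `Tan^t(V)`. -/
def tanPhi {k N : ℕ} (xhat : (Fin k → ℂ) → (Fin (N + 1) → ℂ)) (t : ℕ) :
    ((Fin k → ℂ) × ({I : Fin k → ℕ // I ∈ degLE k t} → ℂ)) → (Fin (N + 1) → ℂ) :=
  fun p => ∑ I : {I : Fin k → ℕ // I ∈ degLE k t}, p.2 I • pd I.1 xhat p.1

/-- The rank of the Jacobian matrix of a linear system `S` of degree-`r` forms:
the maximum over `v ∈ ℂ^k` of the dimension of the span of the gradients at `v`
of the members of `S`. -/
def jacRank (k : ℕ) (S : Set ((Fin k → ℂ) → ℂ)) : ℕ :=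
  sSup {r : ℕ | ∃ v : Fin k → ℂ,
    r = Module.finrank ℂ
      ↥(Submodule.span ℂ {g : Fin k → ℂ | ∃ F ∈ S, g = fun j => pd (Pi.single j 1) F v})}

/-- The coefficients of the reducible degree-`(t+1)` form
`(∑_j w_j v_j) · (∑_{|I| = t} λ_I v^I)`. -/
def prodSymb {k : ℕ} (t : ℕ) (w : Fin k → ℂ) (lam : {I : Fin k → ℕ // I ∈ degLE k t} → ℂ)
    (J : Fin k → ℕ) : ℂ :=
  ∑ j : Fin k,
    if h : 1 ≤ J j ∧ (J - Pi.single j 1 : Fin k → ℕ) ∈ degLE k t ∧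
        (∑ i, (J - Pi.single j 1 : Fin k → ℕ) i) = t
    then w j * lam ⟨(J - Pi.single j 1 : Fin k → ℕ), h.2.1⟩ else 0



section AuxLemmas

variable {k : ℕ} {E : Type} [NormedAddCommGroup E] [NormedSpace ℂ E]

private lemma itFD_cast {n m : ℕ} (h : n = m) (f : (Fin k → ℂ) → E) (u : Fin k → ℂ)
    (v : Fin m → (Fin k → ℂ)) :
    iteratedFDeriv ℂ n f u (fun i => v (Fin.cast h i)) = iteratedFDeriv ℂ m f u v := by
  subst h; rfl

private lemma pderivList_eq {U : Set (Fin k → ℂ)} (hU : IsOpen U)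
    {f : (Fin k → ℂ) → E} (hf : ContDiffOn ℂ (⊤ : ℕ∞) f U) :
    ∀ (L : List (Fin k)) {u : Fin k → ℂ}, u ∈ U →
      pderivList L f u
        = iteratedFDeriv ℂ L.length f u (fun i => Pi.single (L.get i) 1) := by
  intro L
  induction L with
  | nil => intro u hu; simp [pderivList]
  | cons j L IH =>
    intro u hu
    have hev : pderivList L f =ᶠ[nhds u]
        fun u' => iteratedFDeriv ℂ L.length f u' (fun i => Pi.single (L.get i) 1) := by
      filter_upwards [hU.mem_nhds hu] with u' hu' using IH hu'
    have hdiff : DifferentiableAt ℂ (iteratedFDeriv ℂ L.length f) u := by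
      have h1 : ContDiffAt ℂ 1 (iteratedFDeriv ℂ L.length f) u :=
        (hf.contDiffAt (hU.mem_nhds hu)).iteratedFDeriv_right (by
          exact_mod_cast le_top)
      exact h1.differentiableAt one_ne_zero
    show fderiv ℂ (pderivList L f) u (Pi.single j 1) = _
    rw [hev.fderiv_eq, fderiv_continuousMultilinear_apply_const_apply hdiff]
    have hsucc := iteratedFDeriv_succ_apply_left (𝕜 := ℂ) (f := f) (x := u)
      (n := L.length) (fun i : Fin (L.length + 1) => Pi.single ((j :: L).get i) 1)
    exact hsucc.symm

private lemma itFD_ofFn {U : Set (Fin k → ℂ)} (hU : IsOpen U)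
    {f : (Fin k → ℂ) → E} (hf : ContDiffOn ℂ (⊤ : ℕ∞) f U)
    {u : Fin k → ℂ} (hu : u ∈ U) {n : ℕ} (b : Fin n → Fin k) :
    iteratedFDeriv ℂ n f u (fun i => Pi.single (b i) 1)
      = pderivList (List.ofFn b) f u := by
  rw [pderivList_eq hU hf (List.ofFn b) hu,
    ← itFD_cast (List.length_ofFn (f := b)) f u (fun i => Pi.single (b i) 1)]
  congr 1
  funext i
  rw [List.get_ofFn]

private lemma pderivList_perm {U : Set (Fin k → ℂ)} (hU : IsOpen U) {f : (Fin k → ℂ) → E}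
    (hf : ContDiffOn ℂ (⊤ : ℕ∞) f U) {L L' : List (Fin k)} (h : L.Perm L') :
    ∀ {u : Fin k → ℂ}, u ∈ U → pderivList L f u = pderivList L' f u := by
  induction h with
  | nil => intro u hu; rfl
  | @cons a l₁ l₂ h IH =>
    intro u hu
    have heq : fderiv ℂ (pderivList l₁ f) u = fderiv ℂ (pderivList l₂ f) u := by
      apply Filter.EventuallyEq.fderiv_eq
      filter_upwards [hU.mem_nhds hu] with u' hu' using IH hu'
    show fderiv ℂ (pderivList l₁ f) u (Pi.single a 1) = _
    rw [heq]
    rfl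
  | swap a b L =>
    intro u hu
    have hCD : ∀ (m : ℕ∞) (u' : Fin k → ℂ), u' ∈ U →
        ContDiffAt ℂ m (iteratedFDeriv ℂ L.length f) u' := fun m u' hu' =>
      (hf.contDiffAt (hU.mem_nhds hu')).iteratedFDeriv_right (by exact_mod_cast le_top)
    have key : ∀ (c d : Fin k),
        pderivList (c :: d :: L) f u
          = fderiv ℂ (fderiv ℂ (iteratedFDeriv ℂ L.length f)) u (Pi.single c 1)
              (Pi.single d 1) (fun i => Pi.single (L.get i) 1) := by
      intro c d
      have h1 : pderivList (d :: L) f =ᶠ[nhds u]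
          fun u' => fderiv ℂ (iteratedFDeriv ℂ L.length f) u' (Pi.single d 1)
            (fun i => Pi.single (L.get i) 1) := by
        filter_upwards [hU.mem_nhds hu] with u' hu'
        show fderiv ℂ (pderivList L f) u' (Pi.single d 1) = _
        have hev : pderivList L f =ᶠ[nhds u']
            fun y => iteratedFDeriv ℂ L.length f y (fun i => Pi.single (L.get i) 1) := by
          filter_upwards [hU.mem_nhds hu'] with y hy using pderivList_eq hU hf L hy
        rw [hev.fderiv_eq, fderiv_continuousMultilinear_apply_const_apply
          (((hCD 1 u' hu')).differentiableAt one_ne_zero)]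
      show fderiv ℂ (pderivList (d :: L) f) u (Pi.single c 1) = _
      rw [h1.fderiv_eq]
      have hdφ : DifferentiableAt ℂ (fderiv ℂ (iteratedFDeriv ℂ L.length f)) u :=
        ((hCD 2 u hu).fderiv_right (m := 1) (by norm_cast)).differentiableAt
          (by simp)
      have h2 : DifferentiableAt ℂ
          (fun u' => fderiv ℂ (iteratedFDeriv ℂ L.length f) u' (Pi.single d 1)) u :=
        hdφ.clm_apply (differentiableAt_const _)
      rw [fderiv_continuousMultilinear_apply_const_apply h2]
      congr 1
      rw [fderiv_clm_apply hdφ (differentiableAt_const _)]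
      simp
    have hsymm : IsSymmSndFDerivAt ℂ (iteratedFDeriv ℂ L.length f) u :=
      (hCD 2 u hu).isSymmSndFDerivAt (by simp)
    rw [key b a, key a b, hsymm (Pi.single b 1) (Pi.single a 1)]
  | trans h₁ h₂ IH₁ IH₂ => intro u hu; exact (IH₁ hu).trans (IH₂ hu)

/-- An embedding of `Fin t` into itself, as an equiv. -/
private def embEquiv {t : ℕ} (e : Fin t ↪ Fin t) : Equiv.Perm (Fin t) :=
  Equiv.ofBijective e ((Finite.injective_iff_bijective).1 e.injective)

private lemma itFD_diag (t : ℕ) (W : ContinuousMultilinearMap ℂ (fun _ : Fin t => (Fin k → ℂ)) ℂ)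
    (v : Fin k → ℂ) (m : Fin t → (Fin k → ℂ)) :
    iteratedFDeriv ℂ t (fun v => W (fun _ => v)) v m
      = ∑ e : Fin t ↪ Fin t, W (fun j => m ((embEquiv e).symm j)) := by
  classical
  have hG : (fun v : Fin k → ℂ => W (fun _ : Fin t => v))
      = ⇑W ∘ ⇑(ContinuousLinearMap.pi fun _ : Fin t => ContinuousLinearMap.id ℂ (Fin k → ℂ)) :=
    rfl
  rw [hG, ContinuousLinearMap.iteratedFDeriv_comp_right _
    (W.contDiff (n := (⊤ : WithTop ℕ∞))) _ le_top]
  rw [ContinuousMultilinearMap.compContinuousLinearMap_apply,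
    ContinuousMultilinearMap.iteratedFDeriv_eq]
  rw [ContinuousMultilinearMap.iteratedFDeriv, ContinuousMultilinearMap.sum_apply]
  refine Finset.sum_congr rfl fun e _ => ?_
  rw [ContinuousMultilinearMap.iteratedFDerivComponent_apply]
  congr 1
  funext j
  have hj : j ∈ Set.range ⇑e := ((Finite.injective_iff_bijective).1 e.injective).surjective j
  rw [dif_pos hj]
  simp only [ContinuousLinearMap.pi_apply, ContinuousLinearMap.id_apply]
  refine congrArg m (e.injective ?_)
  obtain ⟨i, rfl⟩ := hj
  rw [@Function.Embedding.toEquivRange_symm_apply_self (Fin t) (Fin t) _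
    (fun a b => Classical.propDecidable (a = b)) e i]
  exact (congrArg e (Equiv.symm_apply_apply (embEquiv e) i)).symm

end AuxLemmas

section MainAux

variable {k N : ℕ}

private lemma coneLift_contDiffOn {U : Set (Fin k → ℂ)} {x : (Fin k → ℂ) → (Fin N → ℂ)}
    (hx : ContDiffOn ℂ (⊤ : ℕ∞) x U) : ContDiffOn ℂ (⊤ : ℕ∞) (coneLift x) U := by
  apply contDiffOn_pi.2
  intro i
  refine Fin.cases ?_ (fun i' => ?_) i
  · simpa [coneLift] using contDiffOn_const (c := (1 : ℂ))
  · simpa [coneLift] using (contDiffOn_pi.1 hx) i'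

private lemma pd_formOf {U : Set (Fin k → ℂ)} (hU : IsOpen U) {u₀ : Fin k → ℂ} (hu₀ : u₀ ∈ U)
    {xhat : (Fin k → ℂ) → (Fin (N + 1) → ℂ)} (hxhat : ContDiffOn ℂ (⊤ : ℕ∞) xhat U)
    (t : ℕ) (ξ : Module.Dual ℂ (Fin (N + 1) → ℂ)) (I : Fin k → ℕ) (hI : (∑ j, I j) = t) :
    pd I (formOf xhat u₀ t ξ)
      = fun _ => (Fintype.card (Fin t ↪ Fin t) : ℂ) * ξ (pd I xhat u₀) := by
  classical
  have hL : (idxList I).length = t := by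
    rw [idxList, List.length_flatMap, ← hI]
    have hmap : List.map (List.length ∘ fun j => List.replicate (I j) j) (List.finRange k)
        = List.map I (List.finRange k) := by
      apply List.map_congr_left
      intro a _
      simp
    rw [show List.map (fun a => (List.replicate (I a) a).length) (List.finRange k)
      = List.map I (List.finRange k) from hmap, ← List.ofFn_eq_map, List.sum_ofFn]
  set b : Fin t → Fin k := fun i => (idxList I).get (Fin.cast hL.symm i) with hb
  have hofn : List.ofFn b = idxList I := by
    apply List.ext_get
    · simp [hL]
    · intro n h1 h2
      rw [List.get_ofFn]
      rfl
  set ξ' : (Fin (N + 1) → ℂ) →L[ℂ] ℂ := LinearMap.toContinuousLinearMap ξ with hξ'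
  set W : ContinuousMultilinearMap ℂ (fun _ : Fin t => (Fin k → ℂ)) ℂ :=
    ξ'.compContinuousMultilinearMap (iteratedFDeriv ℂ t xhat u₀) with hW
  have hform : formOf xhat u₀ t ξ = fun v => W (fun _ => v) := rfl
  have hGsmooth : ContDiffOn ℂ (⊤ : ℕ∞) (fun v : Fin k → ℂ => W (fun _ : Fin t => v))
      Set.univ := by
    have : (fun v : Fin k → ℂ => W (fun _ : Fin t => v))
        = ⇑W ∘ ⇑(ContinuousLinearMap.pi fun _ : Fin t =>
            ContinuousLinearMap.id ℂ (Fin k → ℂ)) := rfl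
    rw [this]
    exact (W.contDiff.comp (ContinuousLinearMap.pi fun _ : Fin t =>
      ContinuousLinearMap.id ℂ (Fin k → ℂ)).contDiff).contDiffOn
  funext v
  have step1 : pd I (formOf xhat u₀ t ξ) v
      = iteratedFDeriv ℂ t (fun v : Fin k → ℂ => W (fun _ : Fin t => v)) v
          (fun i => Pi.single (b i) 1) := by
    rw [hform]
    show pderivList (idxList I) (fun v : Fin k → ℂ => W (fun _ : Fin t => v)) v = _
    rw [pderivList_eq isOpen_univ hGsmooth (idxList I) (Set.mem_univ v),
      ← itFD_cast hL (fun v : Fin k → ℂ => W (fun _ : Fin t => v)) v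
        (fun i => Pi.single (b i) 1)]
    rfl
  rw [step1, itFD_diag t W v]
  have hterm : ∀ e : Fin t ↪ Fin t,
      W (fun j => (fun i => (Pi.single (b i) (1:ℂ) : Fin k → ℂ)) ((embEquiv e).symm j))
        = ξ (pd I xhat u₀) := by
    intro e
    have h1 : W (fun j => (Pi.single (b ((embEquiv e).symm j)) (1:ℂ) : Fin k → ℂ))
        = ξ (iteratedFDeriv ℂ t xhat u₀
            (fun j => Pi.single ((b ∘ (embEquiv e).symm) j) 1)) := rfl
    rw [h1, itFD_ofFn hU hxhat hu₀ (b ∘ (embEquiv e).symm),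
      pderivList_perm hU hxhat (Equiv.Perm.ofFn_comp_perm (embEquiv e).symm b) hu₀, hofn]
    rfl
  rw [Finset.sum_congr rfl (fun e _ => hterm e), Finset.sum_const, Finset.card_univ,
    nsmul_eq_mul]

private lemma mem_of_dual {M : Submodule ℂ (Fin (N + 1) → ℂ)} {y : Fin (N + 1) → ℂ}
    (h : ∀ ξ : Module.Dual ℂ (Fin (N + 1) → ℂ), (∀ z ∈ M, ξ z = 0) → ξ y = 0) : y ∈ M := by
  by_contra hy
  obtain ⟨f, hf0, hfmap⟩ := Submodule.exists_dual_map_eq_bot_of_notMem hy inferInstance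
  refine hf0 (h f fun z hz => ?_)
  have : f z ∈ Submodule.map f M := Submodule.mem_map_of_mem hz
  rwa [hfmap, Submodule.mem_bot] at this

end MainAux

/-- A degree-`t` form `g = ∑_{|I|=t} E_I v^I` is the symbol of a Laplace equation of order
`t` for `V` at `P` iff it is apolar to every member `F^t_ξ` of the `t`-th fundamental form. -/
theorem laplace_symbol_iff_apolar_to_fundamental_form (k N t : ℕ) (hk : 1 ≤ k) (hN : 1 ≤ N) (ht : 1 ≤ t)
    (U : Set (Fin k → ℂ)) (hU : IsOpen U) (u₀ : Fin k → ℂ) (hu₀ : u₀ ∈ U)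
    (x : (Fin k → ℂ) → (Fin N → ℂ)) (hx : ContDiffOn ℂ (⊤ : ℕ∞) x U)
    (E : (Fin k → ℕ) → ℂ) :
    (∑ I ∈ degEq k t, E I • pd I (coneLift x) u₀) ∈ osc (coneLift x) (t - 1) u₀ ↔
      ∀ ξ : Module.Dual ℂ (Fin (N + 1) → ℂ),
        (∀ y ∈ osc (coneLift x) (t - 1) u₀, ξ y = 0) →
        (∑ I ∈ degEq k t, E I • pd I (formOf (coneLift x) u₀ t ξ)) = 0 := by
  classical
  have hxhat : ContDiffOn ℂ (⊤ : ℕ∞) (coneLift x) U := coneLift_contDiffOn hx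
  have hMI : ∀ ξ : Module.Dual ℂ (Fin (N + 1) → ℂ),
      (∑ I ∈ degEq k t, E I • pd I (formOf (coneLift x) u₀ t ξ))
        = fun _ : Fin k → ℂ => (Fintype.card (Fin t ↪ Fin t) : ℂ)
            * ξ (∑ I ∈ degEq k t, E I • pd I (coneLift x) u₀) := by
    intro ξ
    funext v
    rw [Finset.sum_apply, map_sum, Finset.mul_sum ]
    refine Finset.sum_congr rfl fun I hI => ?_
    have hIt : (∑ j, I j) = t := (Finset.mem_filter.1 hI).2
    rw [Pi.smul_apply, pd_formOf hU hu₀ hxhat t ξ I hIt, map_smul]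
    simp only [smul_eq_mul]
    ring
  constructor
  · intro hmem ξ hξ
    rw [hMI ξ, hξ _ hmem]
    funext v
    simp
  · intro H
    have hcard : (Fintype.card (Fin t ↪ Fin t) : ℂ) ≠ 0 := by
      have hpos : 0 < Fintype.card (Fin t ↪ Fin t) :=
        Fintype.card_pos_iff.2 ⟨Function.Embedding.refl _⟩
      exact_mod_cast hpos.ne'
    apply mem_of_dual
    intro ξ hξ
    have h1 := H ξ hξ
    rw [hMI ξ] at h1
    have h2 := congrFun h1 (fun _ => 0)
    rw [Pi.zero_apply] at h2
    exact (mul_eq_zero.1 h2).resolve_left hcard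


end
end

section
/- The second fundamental form |II| = |I²| of V at P is the apolar system to the system of quadrics associated to the Laplace equations of order 2 of V at P: a quadratic form q = ∑_{|I|=2} E_I v^I satisfies ∑_{|I|=2} E_I x̂^I(u₀) ∈ T^(1)(u₀) if and only if q is apolar to every element of |II|. Consequently, if V satisfies δ₂ independent Laplace equations of order 2 at P (i.e. dim_ℂ W₂ = δ₂), then dim_ℂ |II| = C(k+1, 2) − δ₂, i.e. |II| has projective dimension C(k+1,2) − 1 − δ₂. -/
/- Common setup: iterated partial derivatives, multi-indices, osculating spaces,
fundamental forms for a local parametrisation `x : ℂ^k → ℂ^N` of a variety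
`V ⊂ ℙ^N`, lifted to `x̂ = (1, x) : ℂ^k → ℂ^{N+1}`. -/

open scoped BigOperators

noncomputable section

/-! ### Auxiliary lemmas -/

section Aux

lemma count_idxList {k : ℕ} (I : Fin k → ℕ) (m : Fin k) : (idxList I).count m = I m := by
  classical
  rw [idxList, List.count_flatMap]
  have h1 : (List.count m ∘ fun j => List.replicate (I j) j)
      = fun j => if m = j then I j else 0 := by
    funext j
    by_cases hmj : m = j
    · simp [List.count_replicate, hmj]
    · simp only [Function.comp_apply, List.count_replicate, beq_iff_eq, if_neg hmj]
      rw [if_neg (fun h : j = m => absurd h.symm hmj)]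
  rw [h1, ← Fin.sum_univ_def]
  simp

lemma length_idxList {k : ℕ} (I : Fin k → ℕ) : (idxList I).length = ∑ j, I j := by
  rw [idxList, List.length_flatMap]
  have h1 : (List.length ∘ fun j => List.replicate (I j) j) = fun j => I j := by
    funext j; simp
  simp [← Fin.sum_univ_def]

lemma exists_pair_of_sum_eq_two {k : ℕ} (I : Fin k → ℕ) (h : (∑ j, I j) = 2) :
    ∃ i j : Fin k, idxList I = [i, j] ∧
      I = fun m => Pi.single i 1 m + Pi.single j 1 m := by
  classical
  have hlen : (idxList I).length = 2 := by rw [length_idxList, h]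
  obtain ⟨i, j, hij⟩ := List.length_eq_two.1 hlen
  refine ⟨i, j, hij, funext fun m => ?_⟩
  have hc := count_idxList I m
  rw [hij] at hc
  rw [← hc]
  simp only [List.count_cons, List.count_nil, Pi.single_apply, beq_iff_eq]
  split_ifs <;> omega

lemma mem_degEq_iff {k r : ℕ} (I : Fin k → ℕ) : I ∈ degEq k r ↔ (∑ j, I j) = r := by
  classical
  constructor
  · exact fun h => (Finset.mem_filter.1 h).2
  · intro h
    refine Finset.mem_filter.2 ⟨Finset.mem_Iic.2 (fun j => ?_), h⟩
    calc I j ≤ ∑ j', I j' := Finset.single_le_sum (fun i _ => Nat.zero_le _) (Finset.mem_univ j)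
    _ = r := h

lemma pair_mem_degEq {k : ℕ} (a b : Fin k) :
    (fun m => Pi.single a 1 m + Pi.single b 1 m) ∈ degEq k 2 := by
  classical
  rw [mem_degEq_iff]
  rw [Finset.sum_add_distrib]
  simp [Pi.single_apply]

lemma pair_eq_pair {k : ℕ} {a b i j : Fin k}
    (h : ∀ m : Fin k, ((if m = a then 1 else 0) + (if m = b then 1 else 0) : ℕ)
        = (if m = i then 1 else 0) + (if m = j then 1 else 0)) :
    (a = i ∧ b = j) ∨ (a = j ∧ b = i) := by
  classical
  by_cases hai : a = i
  · subst hai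
    left
    refine ⟨rfl, ?_⟩
    by_contra hbj
    have hbb := h b
    rw [if_neg hbj, if_pos rfl] at hbb
    split_ifs at hbb <;> omega
  · by_cases haj : a = j
    · subst haj
      right
      refine ⟨rfl, ?_⟩
      by_contra hbi
      have hbb := h b
      rw [if_neg hbi, if_pos rfl] at hbb
      split_ifs at hbb <;> omega
    · exfalso
      have ha := h a
      rw [if_pos rfl, if_neg hai, if_neg haj] at ha
      split_ifs at ha <;> omega

lemma card_degEq_two (k : ℕ) : (degEq k 2).card = (k + 1).choose 2 := by
  classical
  have hcard : (degEq k 2).card = (Finset.univ : Finset (Sym (Fin k) 2)).card := by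
    refine Finset.card_bij' (fun I hI => ⟨(idxList I : Multiset (Fin k)), ?_⟩)
      (fun s _ => fun m => Multiset.count m s.1) ?_ ?_ ?_ ?_
    · rw [Multiset.coe_card, length_idxList, (mem_degEq_iff I).1 hI]
    · intro I hI; exact Finset.mem_univ _
    · intro s _
      rw [mem_degEq_iff]
      rw [Multiset.sum_count_eq_card (fun a _ => Finset.mem_univ a), s.2]
    · intro I hI
      funext m
      simp [Multiset.coe_count, count_idxList]
    · intro s _
      apply Subtype.ext
      apply Multiset.ext.2
      intro a
      simp [Multiset.coe_count, count_idxList]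
  rw [hcard, Finset.card_univ, Sym.card_sym_eq_choose, Fintype.card_fin]
  have h21 : k + 2 - 1 = k + 1 := by omega
  rw [h21]

lemma pderivList_zero {k : ℕ} {E : Type} [NormedAddCommGroup E] [NormedSpace ℂ E] :
    ∀ L : List (Fin k), pderivList L (fun _ => (0 : E)) = fun _ => 0
  | [] => rfl
  | j :: L => by
      funext u
      show fderiv ℂ (pderivList L fun _ => (0 : E)) u (Pi.single j 1) = 0
      rw [pderivList_zero L]
      simp

lemma pderivList_quadratic {k : ℕ} (A' : (Fin k → ℂ) →L[ℂ] (Fin k → ℂ) →L[ℂ] ℂ) (i j : Fin k) :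
    pderivList [i, j] (fun v => A' v v)
      = fun _ => A' (Pi.single i 1) (Pi.single j 1) + A' (Pi.single j 1) (Pi.single i 1) := by
  have hf : ∀ u : Fin k → ℂ, fderiv ℂ (fun v => A' v v) u = A' u + A'.flip u := by
    intro u
    have h := fderiv_clm_apply (c := fun v : Fin k → ℂ => A' v) (u := fun v => v) (x := u)
      (A'.differentiableAt) differentiableAt_id
    rw [fderiv_id', ContinuousLinearMap.fderiv, ContinuousLinearMap.comp_id] at h
    exact h
  have h2 : pderivList [j] (fun v => A' v v)
      = ⇑(A'.flip (Pi.single j 1) + A' (Pi.single j 1)) := by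
    funext u
    show fderiv ℂ (fun v => A' v v) u (Pi.single j 1) = _
    rw [hf u]
    simp [ContinuousLinearMap.flip_apply, add_comm]
  funext u
  show fderiv ℂ (pderivList [j] fun v => A' v v) u (Pi.single i 1) = _
  rw [h2, ContinuousLinearMap.fderiv]
  simp [ContinuousLinearMap.flip_apply, add_comm]

lemma pderivList_pair_of_snd_differentiable {k N : ℕ}
    (xh : (Fin k → ℂ) → (Fin (N + 1) → ℂ)) (u₀ : Fin k → ℂ)
    (hdA : DifferentiableAt ℂ (fderiv ℂ xh) u₀) (i j : Fin k) :
    pderivList [i, j] xh u₀ = fderiv ℂ (fderiv ℂ xh) u₀ (Pi.single i 1) (Pi.single j 1) := by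
  have h1 : fderiv ℂ (fun u' => fderiv ℂ xh u' (Pi.single j 1)) u₀
      = (fderiv ℂ (fderiv ℂ xh) u₀).flip (Pi.single j 1) := by
    rw [fderiv_clm_apply hdA (differentiableAt_const _)]
    simp
  show fderiv ℂ (pderivList [j] xh) u₀ (Pi.single i 1) = _
  have h2 : pderivList [j] xh = fun u' => fderiv ℂ xh u' (Pi.single j 1) := rfl
  rw [h2, h1]
  rfl

lemma finrank_map_eq_of_ker_eq {K : Type*} [Field K] {D M₁ M₂ : Type*} [AddCommGroup D]
    [Module K D] [AddCommGroup M₁] [Module K M₁] [AddCommGroup M₂] [Module K M₂]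
    [FiniteDimensional K D] (f : D →ₗ[K] M₁) (g : D →ₗ[K] M₂) (p : Submodule K D)
    (h : LinearMap.ker f = LinearMap.ker g) :
    Module.finrank K (Submodule.map f p) = Module.finrank K (Submodule.map g p) := by
  have h1 := LinearMap.finrank_range_add_finrank_ker (f.comp p.subtype)
  have h2 := LinearMap.finrank_range_add_finrank_ker (g.comp p.subtype)
  rw [LinearMap.ker_comp, h] at h1
  rw [LinearMap.range_comp, Submodule.range_subtype] at h1 h2
  rw [LinearMap.ker_comp] at h2
  omega

lemma map_dualMap_dualAnnihilator_eq {K : Type*} [Field K] {C V : Type*}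
    [AddCommGroup C] [Module K C] [AddCommGroup V] [Module K V]
    (S : C →ₗ[K] V) (T1 : Submodule K V) :
    Submodule.map S.dualMap T1.dualAnnihilator = (T1.comap S).dualAnnihilator := by
  apply le_antisymm
  · rintro φ ⟨ξ, hξ, rfl⟩
    rw [Submodule.mem_dualAnnihilator]
    intro E hE
    exact (Submodule.mem_dualAnnihilator _).1 hξ (S E) hE
  · intro φ hφ
    set g := T1.mkQ.comp S with hg
    have hker : LinearMap.ker g = T1.comap S := by
      rw [hg, LinearMap.ker_comp, Submodule.ker_mkQ]
    have hle : LinearMap.ker g ≤ LinearMap.ker φ := by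
      rw [hker]
      intro E hE
      exact (Submodule.mem_dualAnnihilator _).1 hφ E hE
    obtain ⟨ψ, hψ⟩ := LinearMap.exists_extend ((Submodule.liftQ (LinearMap.ker g) φ hle).comp
      (g.quotKerEquivRange.symm.toLinearMap))
    refine ⟨ψ.comp T1.mkQ, ?_, ?_⟩
    · rw [SetLike.mem_coe, Submodule.mem_dualAnnihilator]
      intro w hw
      simp [Submodule.mkQ_apply, (Submodule.Quotient.mk_eq_zero T1).2 hw]
    · ext E
      show ψ (T1.mkQ (S E)) = φ E
      have h1 : T1.mkQ (S E) = (LinearMap.range g).subtype ⟨g E, LinearMap.mem_range_self g E⟩ :=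
        rfl
      rw [h1, ← LinearMap.comp_apply ψ, hψ]
      show (Submodule.liftQ (LinearMap.ker g) φ hle)
        (g.quotKerEquivRange.symm ⟨g E, LinearMap.mem_range_self g E⟩) = φ E
      have h2 : g.quotKerEquivRange.symm ⟨g E, LinearMap.mem_range_self g E⟩
          = Submodule.Quotient.mk E := by
        apply g.quotKerEquivRange.injective
        rw [LinearEquiv.apply_symm_apply]
        exact (Subtype.ext (g.quotKerEquivRange_apply_mk E)).symm
      rw [h2, Submodule.liftQ_apply]

lemma finrank_dualAnnihilator_add {K : Type*} [Field K] {C : Type*}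
    [AddCommGroup C] [Module K C] [FiniteDimensional K C] (W : Submodule K C) :
    Module.finrank K W.dualAnnihilator + Module.finrank K W = Module.finrank K C := by
  rw [← LinearEquiv.finrank_eq (Subspace.quotEquivAnnihilator W)]
  exact Submodule.finrank_quotient_add_finrank W

/-- The linear map `ξ ↦ F^2_ξ`. -/
def formLin {k N : ℕ} (xhat : (Fin k → ℂ) → (Fin (N + 1) → ℂ)) (u₀ : Fin k → ℂ) :
    Module.Dual ℂ (Fin (N + 1) → ℂ) →ₗ[ℂ] ((Fin k → ℂ) → ℂ) where
  toFun ξ := formOf xhat u₀ 2 ξ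
  map_add' ξ η := by funext v; simp [formOf]
  map_smul' c ξ := by funext v; simp [formOf]

end Aux

/-- The second fundamental form `|II| = |I²|` is the apolar system to the quadrics associated
to the Laplace equations of order 2; consequently `dim_ℂ |II| = C(k+1, 2) - δ₂`. -/
theorem second_fundamental_form_apolar_and_dimension (k N t : ℕ) (hk : 1 ≤ k) (hN : 1 ≤ N) (ht : 1 ≤ t)
    (U : Set (Fin k → ℂ)) (hU : IsOpen U) (u₀ : Fin k → ℂ) (hu₀ : u₀ ∈ U)
    (x : (Fin k → ℂ) → (Fin N → ℂ)) (hx : ContDiffOn ℂ (⊤ : ℕ∞) x U) :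
    (∀ E : (Fin k → ℕ) → ℂ,
        (∑ I ∈ degEq k 2, E I • pd I (coneLift x) u₀) ∈ osc (coneLift x) 1 u₀ ↔
          ∀ F ∈ fundSet (coneLift x) u₀ 2,
            (∑ I ∈ degEq k 2, E I • pd I F) = 0) ∧
      Module.finrank ℂ ↥(fundForm (coneLift x) u₀ 2) =
        Nat.choose (k + 1) 2 -
          Module.finrank ℂ ↥(Submodule.comap (symbolMap (coneLift x) u₀ 2)
            (osc (coneLift x) 1 u₀)) := by
  classical
  have hxhat : ContDiffAt ℂ (⊤ : ℕ∞) (coneLift x) u₀ := by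
    have hcd : ContDiffOn ℂ (⊤ : ℕ∞) (coneLift x) U := by
      rw [contDiffOn_pi]
      intro i
      refine Fin.cases ?_ ?_ i
      · have h0 : (fun u : Fin k → ℂ => coneLift x u 0) = fun _ => 1 := by
          funext u; simp [coneLift]
        rw [h0]; exact contDiffOn_const
      · intro i'
        have h0 : (fun u : Fin k → ℂ => coneLift x u i'.succ) = fun u => x u i' := by
          funext u; simp [coneLift]
        rw [h0]; exact (contDiffOn_pi.1 hx) i'
    exact hcd.contDiffAt (hU.mem_nhds hu₀)
  have hdA : DifferentiableAt ℂ (fderiv ℂ (coneLift x)) u₀ :=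
    (hxhat.fderiv_right (m := 1) (by
      have h : ((1 + 1 : ℕ∞) : WithTop ℕ∞) ≤ ((⊤ : ℕ∞) : WithTop ℕ∞) := WithTop.coe_le_coe.2 le_top
      simpa using h)).differentiableAt one_ne_zero
  set xh := coneLift x with hxhdef
  set A := fderiv ℂ (fderiv ℂ xh) u₀ with hAdef
  have hsymm : ∀ v w, A v w = A w v := hxhat.isSymmSndFDerivAt (by
    have h : ((2 : ℕ∞) : WithTop ℕ∞) ≤ ((⊤ : ℕ∞) : WithTop ℕ∞) := WithTop.coe_le_coe.2 le_top
    simpa using h)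
  have hpdx : ∀ i j : Fin k, pderivList [i, j] xh u₀ = A (Pi.single i 1) (Pi.single j 1) :=
    fun i j => pderivList_pair_of_snd_differentiable xh u₀ hdA i j
  set Ψ := formLin xh u₀ with hΨdef
  have hform : ∀ ξ : Module.Dual ℂ (Fin (N + 1) → ℂ), Ψ ξ = fun v => ξ (A v v) := by
    intro ξ; funext v
    show ξ (iteratedFDeriv ℂ 2 xh u₀ fun _ => v) = ξ (A v v)
    rw [iteratedFDeriv_two_apply]
  have hformCLM : ∀ ξ : Module.Dual ℂ (Fin (N + 1) → ℂ),
      ∃ A' : (Fin k → ℂ) →L[ℂ] (Fin k → ℂ) →L[ℂ] ℂ,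
        (∀ v w, A' v w = ξ (A v w)) ∧ (Ψ ξ = fun v => A' v v) := by
    intro ξ
    refine ⟨(ContinuousLinearMap.compL ℂ (Fin k → ℂ) (Fin (N + 1) → ℂ) ℂ
      (LinearMap.toContinuousLinearMap ξ)).comp A, fun v w => ?_, ?_⟩
    · simp
    · rw [hform ξ]; funext v; simp
  have key1 : ∀ (ξ : Module.Dual ℂ (Fin (N + 1) → ℂ)) (I : Fin k → ℕ), I ∈ degEq k 2 →
      pd I (Ψ ξ) = fun _ => 2 * ξ (pd I xh u₀) := by
    intro ξ I hI
    obtain ⟨i, j, hlist, hIeq⟩ := exists_pair_of_sum_eq_two I ((mem_degEq_iff I).1 hI)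
    obtain ⟨A', hA'1, hA'2⟩ := hformCLM ξ
    simp only [pd]
    rw [hlist, hA'2, pderivList_quadratic]
    funext v
    rw [hpdx i j, hA'1, hA'1, hsymm (Pi.single j 1) (Pi.single i 1)]
    ring
  have hsum : ∀ (E : (Fin k → ℕ) → ℂ) (ξ : Module.Dual ℂ (Fin (N + 1) → ℂ)),
      (∑ I ∈ degEq k 2, E I • pd I (Ψ ξ)) = fun _ : Fin k → ℂ =>
        2 * ξ (∑ I ∈ degEq k 2, E I • pd I xh u₀) := by
    intro E ξ
    funext v
    rw [Finset.sum_apply]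
    rw [map_sum, Finset.mul_sum]
    refine Finset.sum_congr rfl fun I hI => ?_
    have h1 := congrFun (key1 ξ I hI) v
    rw [Pi.smul_apply, h1, map_smul, smul_eq_mul, smul_eq_mul]
    ring
  constructor
  · intro E
    constructor
    · intro hmem F hF
      obtain ⟨ξ, hann, hFeq⟩ := hF
      have hFΨ : F = Ψ ξ := hFeq
      rw [hFΨ, hsum E ξ]
      funext v
      rw [hann _ hmem, mul_zero]
      rfl
    · intro hall
      have hdual : ∀ ξ ∈ (osc xh 1 u₀).dualAnnihilator,
          ξ (∑ I ∈ degEq k 2, E I • pd I xh u₀) = 0 := by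
        intro ξ hξ
        have hmemF : Ψ ξ ∈ fundSet xh u₀ 2 :=
          ⟨ξ, fun y hy => (Submodule.mem_dualAnnihilator _).1 hξ y hy, rfl⟩
        have h := hall (Ψ ξ) hmemF
        rw [hsum E ξ] at h
        have h2 := congrFun h (fun _ => 0)
        rcases mul_eq_zero.1 h2 with h3 | h3
        · exact absurd h3 two_ne_zero
        · exact h3
      exact (Subspace.forall_mem_dualAnnihilator_apply_eq_zero_iff (osc xh 1 u₀) _).1
        (fun φ hφ => hdual φ hφ)
  · -- dimension count
    have hpd0 : ∀ I : Fin k → ℕ, pd I (0 : (Fin k → ℂ) → ℂ) = fun _ => 0 := by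
      intro I
      have h0 : (0 : (Fin k → ℂ) → ℂ) = fun _ => (0 : ℂ) := rfl
      simp only [pd]
      rw [h0, pderivList_zero]
    have hkery : ∀ ξ : Module.Dual ℂ (Fin (N + 1) → ℂ),
        Ψ ξ = 0 ↔ (symbolMap xh u₀ 2).dualMap ξ = 0 := by
      intro ξ
      constructor
      · intro h0
        have hz : ∀ I : Fin k → ℕ, I ∈ degEq k 2 → ξ (pd I xh u₀) = 0 := by
          intro I hI
          have h1 := key1 ξ I hI
          rw [h0, hpd0 I] at h1
          have h2 := congrFun h1.symm (fun _ => 0)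
          rcases mul_eq_zero.1 h2 with h3 | h3
          · exact absurd h3 two_ne_zero
          · exact h3
        refine LinearMap.ext fun E => ?_
        show ξ (∑ I : {I : Fin k → ℕ // I ∈ degEq k 2}, E I • pd I.1 xh u₀) = 0
        rw [map_sum]
        refine Finset.sum_eq_zero fun I _ => ?_
        rw [map_smul, hz I.1 I.2, smul_zero]
      · intro h0
        have hz : ∀ I : {I : Fin k → ℕ // I ∈ degEq k 2}, ξ (pd I.1 xh u₀) = 0 := by
          intro I
          have h1 := LinearMap.ext_iff.1 h0 (Pi.single (M := fun _ => ℂ) I 1)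
          have hS : (∑ J : {I : Fin k → ℕ // I ∈ degEq k 2},
              Pi.single (M := fun _ => ℂ) I 1 J • pd J.1 xh u₀) = pd I.1 xh u₀ := by
            rw [Fintype.sum_eq_single I (fun J hJ => ?_)]
            · rw [Pi.single_eq_same, one_smul]
            · rw [Pi.single_eq_of_ne hJ, zero_smul]
          have h1' : ξ (∑ J : {I : Fin k → ℕ // I ∈ degEq k 2},
              Pi.single (M := fun _ => ℂ) I 1 J • pd J.1 xh u₀) = 0 := h1
          rw [hS] at h1'
          exact h1'
        have hAij : ∀ a b : Fin k, ξ (A (Pi.single a 1) (Pi.single b 1)) = 0 := by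
          intro a b
          have hI : (fun m => Pi.single a 1 m + Pi.single b 1 m) ∈ degEq k 2 :=
            pair_mem_degEq a b
          obtain ⟨i, j, hlist, hIeq⟩ := exists_pair_of_sum_eq_two _ ((mem_degEq_iff _).1 hI)
          have h0' := hz ⟨_, hI⟩
          simp only [pd] at h0'
          rw [hlist, hpdx] at h0'
          have hpq : (a = i ∧ b = j) ∨ (a = j ∧ b = i) := by
            apply pair_eq_pair
            intro m
            have hm := congrFun hIeq m
            simpa [Pi.single_apply] using hm
          rcases hpq with ⟨rfl, rfl⟩ | ⟨rfl, rfl⟩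
          · exact h0'
          · rw [hsymm]; exact h0'
        rw [hform ξ]
        funext v
        have hv : v = ∑ a, v a • (Pi.single a 1 : Fin k → ℂ) := by
          funext m
          rw [Finset.sum_apply]
          simp [Pi.single_apply]
        have hexp : ξ (A v v)
            = ∑ a, ∑ b, v a * v b * ξ (A (Pi.single a 1) (Pi.single b 1)) := by
          conv_lhs => rw [hv]
          simp only [map_sum, map_smul, ContinuousLinearMap.coe_sum', Finset.sum_apply,
            ContinuousLinearMap.coe_smul', Pi.smul_apply, smul_eq_mul, Finset.mul_sum]
          refine Finset.sum_congr rfl fun a _ => ?_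
          refine Finset.sum_congr rfl fun b _ => ?_
          rw [hsymm (Pi.single b 1) (Pi.single a 1)]
          ring
        show ξ (A v v) = 0
        rw [hexp]
        refine Finset.sum_eq_zero fun a _ => Finset.sum_eq_zero fun b _ => ?_
        rw [hAij, mul_zero]
    have hker_eq : LinearMap.ker Ψ = LinearMap.ker (symbolMap xh u₀ 2).dualMap := by
      ext ξ
      simp only [LinearMap.mem_ker]
      exact hkery ξ
    have hfund : fundForm xh u₀ 2 = Submodule.map Ψ (osc xh 1 u₀).dualAnnihilator := by
      rw [fundForm]
      have hset : fundSet xh u₀ 2 = ↑(Submodule.map Ψ (osc xh 1 u₀).dualAnnihilator) := by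
        ext F
        simp only [fundSet, Set.mem_setOf_eq, SetLike.mem_coe, Submodule.mem_map,
          Submodule.mem_dualAnnihilator]
        constructor
        · rintro ⟨ξ, h1, h2⟩
          exact ⟨ξ, h1, h2.symm⟩
        · rintro ⟨ξ, h1, h2⟩
          exact ⟨ξ, h1, h2.symm⟩
      rw [hset, Submodule.span_eq]
    rw [hfund]
    rw [finrank_map_eq_of_ker_eq Ψ (symbolMap xh u₀ 2).dualMap _ hker_eq]
    rw [map_dualMap_dualAnnihilator_eq]
    have h1 := finrank_dualAnnihilator_add (K := ℂ)
      ((osc xh 1 u₀).comap (symbolMap xh u₀ 2))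
    have h2 : Module.finrank ℂ ({I : Fin k → ℕ // I ∈ degEq k 2} → ℂ) = (k + 1).choose 2 := by
      rw [Module.finrank_fintype_fun_eq_card, Fintype.card_coe]
      exact card_degEq_two k
    omega

end
end
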